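/- Let V = ⊕_{β∈F^{l₂+l₃}} V_β be a generalized weight module of S(l₁,l₂,l₃;0,Γ) (with l₁+l₂ ≥ 3, l₂+l₃ ≥ 3) such that there is σ ∈ Γ and μ ∈ F^{l₂+l₃} with V = V_{σ+μ} (a single generalized weight space). If V is irreducible or indecomposable, then σ + μ = 0 and V is the one-dimensional trivial module. -/

import Mathlib

open scoped BigOperators

namespace SDF

variable (F : Type) [Field F] [IsAlgClosed F] [CharZero F]
variable (l₁ l₂ l₃ : ℕ) (Γ : AddSubgroup (Fin (l₂ + l₃) → F))

/-- The semigroup algebra `A(l₁,l₂,l₃;Γ) = F[Γ × ℕ^{l₁+l₂}]`,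
with basis `x^α t^i` for `α ∈ Γ`, `i ∈ ℕ^{l₁+l₂}`. -/
abbrev Alg : Type := AddMonoidAlgebra F (↥Γ × (Fin (l₁ + l₂) →₀ ℕ))

/-- The basis monomial `x^α t^i`. -/
noncomputable def mono (α : Γ) (i : Fin (l₁ + l₂) →₀ ℕ) : Alg F l₁ l₂ l₃ Γ :=
  AddMonoidAlgebra.single (α, i) 1

/-- The `p`-th coordinate of `α ∈ Γ ⊆ F^{l₂+l₃}`, with the convention `α_p = 0` for `p ≤ l₁`. -/
def acoord (p : Fin (l₁ + l₂ + l₃)) (α : Γ) : F :=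
  if h : l₁ ≤ (p : ℕ) then (α : Fin (l₂ + l₃) → F) ⟨(p : ℕ) - l₁, by have := p.isLt; omega⟩
  else 0

/-- The `p`-th coordinate of a general `μ ∈ F^{l₂+l₃}`, with the convention `μ_p = 0` for `p ≤ l₁`. -/
def fcoord (p : Fin (l₁ + l₂ + l₃)) (μ : Fin (l₂ + l₃) → F) : F :=
  if h : l₁ ≤ (p : ℕ) then μ ⟨(p : ℕ) - l₁, by have := p.isLt; omega⟩ else 0

/-- The `p`-th component of `i ∈ ℕ^{l₁+l₂}`, with the convention `i_p = 0` for `p > l₁+l₂`. -/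
def icoord (p : Fin (l₁ + l₂ + l₃)) (i : Fin (l₁ + l₂) →₀ ℕ) : ℕ :=
  if h : (p : ℕ) < l₁ + l₂ then i ⟨(p : ℕ), h⟩ else 0

/-- `i - 1_[p]` (truncated subtraction; only used with coefficient `i_p`). -/
noncomputable def lower (p : Fin (l₁ + l₂ + l₃)) (i : Fin (l₁ + l₂) →₀ ℕ) : Fin (l₁ + l₂) →₀ ℕ :=
  if h : (p : ℕ) < l₁ + l₂ then i - Finsupp.single ⟨(p : ℕ), h⟩ 1 else i

/-- The derivation `∂_p` of `A(l₁,l₂,l₃;Γ)`: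
`∂_p(x^α t^i) = α_p x^α t^i + i_p x^α t^{i - 1_[p]}`. -/
noncomputable def pd (p : Fin (l₁ + l₂ + l₃)) :
    Alg F l₁ l₂ l₃ Γ →ₗ[F] Alg F l₁ l₂ l₃ Γ :=
  (Finsupp.lsum F fun g : ↥Γ × (Fin (l₁ + l₂) →₀ ℕ) =>
    LinearMap.toSpanSingleton F (Alg F l₁ l₂ l₃ Γ)
      (acoord F l₁ l₂ l₃ Γ p g.1 • mono F l₁ l₂ l₃ Γ g.1 g.2
        + (icoord l₁ l₂ l₃ p g.2 : F) • mono F l₁ l₂ l₃ Γ g.1 (lower l₁ l₂ l₃ p g.2)))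
    ∘ₗ (AddMonoidAlgebra.coeffLinearEquiv F).toLinearMap

/-- The Witt algebra `W(l₁,l₂,l₃;Γ) = A·D`; the tuple `u : Wt` represents `Σ_p u_p ∂_p`. -/
abbrev Wt : Type := Fin (l₁ + l₂ + l₃) → Alg F l₁ l₂ l₃ Γ

/-- The Lie bracket of `W(l₁,l₂,l₃;Γ)`:
`[Σ_p u_p ∂_p, Σ_q v_q ∂_q] = Σ_{p,q} (u_p ∂_p(v_q) - v_p ∂_p(u_q)) ∂_q`. -/
noncomputable def wbr (u v : Wt F l₁ l₂ l₃ Γ) : Wt F l₁ l₂ l₃ Γ :=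
  fun r => ∑ p, (u p * pd F l₁ l₂ l₃ Γ p (v r) - v p * pd F l₁ l₂ l₃ Γ p (u r))

/-- `D_{p,q}(u) = ∂_p(u) ∂_q - ∂_q(u) ∂_p`. -/
noncomputable def Dpq (p q : Fin (l₁ + l₂ + l₃)) (u : Alg F l₁ l₂ l₃ Γ) :
    Wt F l₁ l₂ l₃ Γ :=
  Pi.single q (pd F l₁ l₂ l₃ Γ p u) - Pi.single p (pd F l₁ l₂ l₃ Γ q u)

/-- The divergence-free algebra `S(l₁,l₂,l₃;0,Γ) = Span{D_{p,q}(u)}`. -/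
noncomputable def Ssub : Submodule F (Wt F l₁ l₂ l₃ Γ) :=
  Submodule.span F {w | ∃ p q u, w = Dpq F l₁ l₂ l₃ Γ p q u}

/-- `Γ` is nondegenerate: it contains an `F`-basis of `F^{l₂+l₃}`, i.e. it spans. -/
def Nondeg : Prop := Submodule.span F (Γ : Set (Fin (l₂ + l₃) → F)) = ⊤

/-- The divergence `div(Σ_p u_p ∂_p) = Σ_p ∂_p(u_p)`. -/
noncomputable def dvg (w : Wt F l₁ l₂ l₃ Γ) : Alg F l₁ l₂ l₃ Γ :=
  ∑ p, pd F l₁ l₂ l₃ Γ p (w p)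

/-- The action of `Σ_p u_p ∂_p ∈ W` on `A_μ` (the space `A` with basis `v_{β,i}` the monomials):
`(u ∂_p) . v = u * (∂_p + μ_p) v`. On basis elements this gives exactly the defining formulas
of the module `A_μ`. -/
noncomputable def actW (μ : Fin (l₂ + l₃) → F) (X : Wt F l₁ l₂ l₃ Γ) :
    Alg F l₁ l₂ l₃ Γ →ₗ[F] Alg F l₁ l₂ l₃ Γ :=
  ∑ p, (LinearMap.mulLeft F (X p)).comp
    (pd F l₁ l₂ l₃ Γ p + fcoord F l₁ l₂ l₃ p μ • LinearMap.id)

/-- The element `Σ_p a_p ∂_p` of `D ⊆ W`. -/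
noncomputable def wD (a : Fin (l₁ + l₂ + l₃) → F) : Wt F l₁ l₂ l₃ Γ :=
  fun p => algebraMap F (Alg F l₁ l₂ l₃ Γ) (a p)

/-- The element `∂_p ∈ W`. -/
noncomputable def wdelta (p : Fin (l₁ + l₂ + l₃)) : Wt F l₁ l₂ l₃ Γ :=
  Pi.single p 1

/-- `β(∂) = Σ_{p>l₁} a_p β_p` for `∂ = Σ_p a_p ∂_p`. -/
def beval (β : Fin (l₂ + l₃) → F) (a : Fin (l₁ + l₂ + l₃) → F) : F :=
  ∑ p, a p * fcoord F l₁ l₂ l₃ p β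


section Aux

set_option linter.unusedSectionVars false

variable {F : Type} [Field F] [CharZero F]
variable {l₁ l₂ l₃ : ℕ} {Γ : AddSubgroup (Fin (l₂ + l₃) → F)}

lemma mono_mul (α α' : Γ) (i i' : Fin (l₁ + l₂) →₀ ℕ) :
    mono F l₁ l₂ l₃ Γ α i * mono F l₁ l₂ l₃ Γ α' i'
      = mono F l₁ l₂ l₃ Γ (α + α') (i + i') := by
  simp [mono, AddMonoidAlgebra.single_mul_single, Prod.mk_add_mk]

lemma pd_mono (p : Fin (l₁ + l₂ + l₃)) (α : Γ) (i : Fin (l₁ + l₂) →₀ ℕ) :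
    pd F l₁ l₂ l₃ Γ p (mono F l₁ l₂ l₃ Γ α i)
      = fcoord F l₁ l₂ l₃ p (α : Fin (l₂ + l₃) → F) • mono F l₁ l₂ l₃ Γ α i
        + (icoord l₁ l₂ l₃ p i : F) • mono F l₁ l₂ l₃ Γ α (lower l₁ l₂ l₃ p i) := by
  have h : acoord F l₁ l₂ l₃ Γ p α = fcoord F l₁ l₂ l₃ p (α : Fin (l₂ + l₃) → F) := rfl
  unfold pd mono
  rw [LinearMap.comp_apply, show (AddMonoidAlgebra.coeffLinearEquiv F).toLinearMap
        (AddMonoidAlgebra.single ((α, i) : ↥Γ × (Fin (l₁ + l₂) →₀ ℕ)) (1 : F))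
        = Finsupp.single (α, i) (1 : F) from rfl]
  erw [Finsupp.lsum_single]
  rw [LinearMap.toSpanSingleton_apply, one_smul, h]

lemma fcoord_add (p : Fin (l₁ + l₂ + l₃)) (μ ν : Fin (l₂ + l₃) → F) :
    fcoord F l₁ l₂ l₃ p (μ + ν) = fcoord F l₁ l₂ l₃ p μ + fcoord F l₁ l₂ l₃ p ν := by
  unfold fcoord; split <;> simp

lemma fcoord_neg (p : Fin (l₁ + l₂ + l₃)) (μ : Fin (l₂ + l₃) → F) :
    fcoord F l₁ l₂ l₃ p (-μ) = -fcoord F l₁ l₂ l₃ p μ := by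
  unfold fcoord; split <;> simp

lemma fcoord_zero (p : Fin (l₁ + l₂ + l₃)) :
    fcoord F l₁ l₂ l₃ p (0 : Fin (l₂ + l₃) → F) = 0 := by
  unfold fcoord; split <;> simp

lemma icoord_add (p : Fin (l₁ + l₂ + l₃)) (i i' : Fin (l₁ + l₂) →₀ ℕ) :
    icoord l₁ l₂ l₃ p (i + i') = icoord l₁ l₂ l₃ p i + icoord l₁ l₂ l₃ p i' := by
  unfold icoord; split <;> simp

lemma icoord_zero (p : Fin (l₁ + l₂ + l₃)) :
    icoord l₁ l₂ l₃ p (0 : Fin (l₁ + l₂) →₀ ℕ) = 0 := by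
  unfold icoord; split <;> simp

lemma icoord_big (p : Fin (l₁ + l₂ + l₃)) (h : ¬ ((p : ℕ) < l₁ + l₂))
    (i : Fin (l₁ + l₂) →₀ ℕ) : icoord l₁ l₂ l₃ p i = 0 := by
  unfold icoord; rw [dif_neg h]

lemma icoord_small (p : Fin (l₁ + l₂ + l₃)) (h : (p : ℕ) < l₁ + l₂)
    (i : Fin (l₁ + l₂) →₀ ℕ) : icoord l₁ l₂ l₃ p i = i ⟨(p : ℕ), h⟩ := by
  unfold icoord; rw [dif_pos h]

lemma lower_big (p : Fin (l₁ + l₂ + l₃)) (h : ¬ ((p : ℕ) < l₁ + l₂))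
    (i : Fin (l₁ + l₂) →₀ ℕ) : lower l₁ l₂ l₃ p i = i := by
  unfold lower; rw [dif_neg h]

lemma lower_small (p : Fin (l₁ + l₂ + l₃)) (h : (p : ℕ) < l₁ + l₂)
    (i : Fin (l₁ + l₂) →₀ ℕ) :
    lower l₁ l₂ l₃ p i = i - Finsupp.single ⟨(p : ℕ), h⟩ 1 := by
  unfold lower; rw [dif_pos h]

lemma lower_add (p : Fin (l₁ + l₂ + l₃)) (i i' : Fin (l₁ + l₂) →₀ ℕ)
    (h : icoord l₁ l₂ l₃ p i ≠ 0 ∨ icoord l₁ l₂ l₃ p i' = 0) :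
    lower l₁ l₂ l₃ p (i + i') = lower l₁ l₂ l₃ p i + i' := by
  by_cases hp : (p : ℕ) < l₁ + l₂
  · rw [lower_small p hp, lower_small p hp]
    rw [icoord_small p hp, icoord_small p hp] at h
    ext t
    simp only [Finsupp.tsub_apply, Finsupp.add_apply, Finsupp.single_apply]
    rcases h with h | h <;>
    · by_cases ht : (⟨(p : ℕ), hp⟩ : Fin (l₁ + l₂)) = t
      · subst ht; simp only [if_pos rfl, if_true]; omega
      · rw [if_neg ht]; omega
  · rw [lower_big p hp, lower_big p hp]

lemma smul_lower_add (p : Fin (l₁ + l₂ + l₃)) (α : Γ) (i i' : Fin (l₁ + l₂) →₀ ℕ) :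
    (icoord l₁ l₂ l₃ p i : F) • mono F l₁ l₂ l₃ Γ α (lower l₁ l₂ l₃ p (i + i'))
      = (icoord l₁ l₂ l₃ p i : F) • mono F l₁ l₂ l₃ Γ α (lower l₁ l₂ l₃ p i + i') := by
  by_cases h : icoord l₁ l₂ l₃ p i = 0
  · rw [h]; simp
  · rw [lower_add p i i' (Or.inl h)]

lemma single_eq_smul_mono (a : ↥Γ × (Fin (l₁ + l₂) →₀ ℕ)) (b : F) :
    (AddMonoidAlgebra.single a b : Alg F l₁ l₂ l₃ Γ) = b • mono F l₁ l₂ l₃ Γ a.1 a.2 := by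
  rw [mono, Prod.mk.eta]
  rw [AddMonoidAlgebra.smul_single', mul_one]

lemma pd_mono_mul (p : Fin (l₁ + l₂ + l₃)) (α α' : Γ) (i i' : Fin (l₁ + l₂) →₀ ℕ) :
    pd F l₁ l₂ l₃ Γ p (mono F l₁ l₂ l₃ Γ α i * mono F l₁ l₂ l₃ Γ α' i')
      = pd F l₁ l₂ l₃ Γ p (mono F l₁ l₂ l₃ Γ α i) * mono F l₁ l₂ l₃ Γ α' i'
        + mono F l₁ l₂ l₃ Γ α i * pd F l₁ l₂ l₃ Γ p (mono F l₁ l₂ l₃ Γ α' i') := by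
  rw [mono_mul, pd_mono, pd_mono, pd_mono]
  have hc : ((α + α' : Γ) : Fin (l₂ + l₃) → F) = (α : Fin (l₂ + l₃) → F) + α' := rfl
  rw [hc, fcoord_add, icoord_add]
  simp only [add_mul, mul_add, smul_mul_assoc, mul_smul_comm, mono_mul]
  rw [add_smul, Nat.cast_add, add_smul, smul_lower_add]
  have h2 : (icoord l₁ l₂ l₃ p i' : F)
        • mono F l₁ l₂ l₃ Γ (α + α') (lower l₁ l₂ l₃ p (i + i'))
      = (icoord l₁ l₂ l₃ p i' : F)
        • mono F l₁ l₂ l₃ Γ (α + α') (i + lower l₁ l₂ l₃ p i') := by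
    rw [add_comm i i', smul_lower_add, add_comm (lower l₁ l₂ l₃ p i') i]
  rw [h2]
  abel

lemma pd_mul (p : Fin (l₁ + l₂ + l₃)) (x y : Alg F l₁ l₂ l₃ Γ) :
    pd F l₁ l₂ l₃ Γ p (x * y)
      = pd F l₁ l₂ l₃ Γ p x * y + x * pd F l₁ l₂ l₃ Γ p y := by
  induction x using AddMonoidAlgebra.induction_linear with
  | zero => simp
  | add f g hf hg =>
      rw [add_mul, map_add, map_add, hf, hg]; ring
  | single a b =>
    induction y using AddMonoidAlgebra.induction_linear with
    | zero => simp
    | add f g hf hg =>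
        rw [mul_add, map_add, map_add, hf, hg]; ring
    | single c d =>
        rw [single_eq_smul_mono a b, single_eq_smul_mono c d]
        simp only [smul_mul_assoc, mul_smul_comm, map_smul, pd_mono_mul, smul_add, smul_smul]

lemma lower_comm (p q : Fin (l₁ + l₂ + l₃)) (i : Fin (l₁ + l₂) →₀ ℕ) :
    lower l₁ l₂ l₃ p (lower l₁ l₂ l₃ q i) = lower l₁ l₂ l₃ q (lower l₁ l₂ l₃ p i) := by
  by_cases hp : (p : ℕ) < l₁ + l₂ <;> by_cases hq : (q : ℕ) < l₁ + l₂ <;>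
    simp only [lower_big, lower_small, hp, hq, dif_pos, dif_neg, not_false_iff]
  ext t
  simp only [Finsupp.tsub_apply]
  omega

lemma icoord_lower (p q : Fin (l₁ + l₂ + l₃)) (h : (p : ℕ) ≠ (q : ℕ))
    (i : Fin (l₁ + l₂) →₀ ℕ) :
    icoord l₁ l₂ l₃ p (lower l₁ l₂ l₃ q i) = icoord l₁ l₂ l₃ p i := by
  by_cases hp : (p : ℕ) < l₁ + l₂
  · by_cases hq : (q : ℕ) < l₁ + l₂
    · rw [icoord_small p hp, icoord_small p hp, lower_small q hq, Finsupp.tsub_apply,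
        Finsupp.single_apply, if_neg (by simp [Fin.ext_iff]; omega)]
      omega
    · rw [lower_big q hq]
  · rw [icoord_big p hp, icoord_big p hp]

lemma pd_pd_mono (p q : Fin (l₁ + l₂ + l₃)) (α : Γ) (i : Fin (l₁ + l₂) →₀ ℕ) :
    pd F l₁ l₂ l₃ Γ p (pd F l₁ l₂ l₃ Γ q (mono F l₁ l₂ l₃ Γ α i))
      = pd F l₁ l₂ l₃ Γ q (pd F l₁ l₂ l₃ Γ p (mono F l₁ l₂ l₃ Γ α i)) := by
  by_cases hpq : (p : ℕ) = (q : ℕ)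
  · have : p = q := Fin.ext hpq
    rw [this]
  · simp only [pd_mono, map_add, map_smul]
    rw [icoord_lower p q hpq, icoord_lower q p (Ne.symm hpq), lower_comm]
    module

lemma pd_comm (p q : Fin (l₁ + l₂ + l₃)) (x : Alg F l₁ l₂ l₃ Γ) :
    pd F l₁ l₂ l₃ Γ p (pd F l₁ l₂ l₃ Γ q x)
      = pd F l₁ l₂ l₃ Γ q (pd F l₁ l₂ l₃ Γ p x) := by
  induction x using AddMonoidAlgebra.induction_linear with
  | zero => simp
  | add f g hf hg => rw [map_add, map_add, hf, hg, map_add, map_add]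
  | single a b =>
      rw [single_eq_smul_mono a b, map_smul, map_smul, map_smul, map_smul, pd_pd_mono]


lemma pd_mono_zero (p : Fin (l₁ + l₂ + l₃)) :
    pd F l₁ l₂ l₃ Γ p (mono F l₁ l₂ l₃ Γ 0 0) = 0 := by
  rw [pd_mono, show ((0 : Γ) : Fin (l₂ + l₃) → F) = 0 from rfl, fcoord_zero, icoord_zero]
  simp

lemma one_eq_mono (hdummy : True) : (1 : Alg F l₁ l₂ l₃ Γ) = mono F l₁ l₂ l₃ Γ 0 0 := by
  rfl

lemma pd_algebraMap (p : Fin (l₁ + l₂ + l₃)) (c : F) :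
    pd F l₁ l₂ l₃ Γ p (algebraMap F (Alg F l₁ l₂ l₃ Γ) c) = 0 := by
  rw [Algebra.algebraMap_eq_smul_one, map_smul, one_eq_mono trivial, pd_mono_zero, smul_zero]

lemma sum_single_mul {R : Type} [NonUnitalNonAssocSemiring R] {n : ℕ} (q : Fin n) (A : R)
    (w : Fin n → R) :
    ∑ s, (Pi.single q A : Fin n → R) s * w s = A * w q := by
  have h1 : ∀ s : Fin n, (Pi.single q A : Fin n → R) s * w s
      = (Pi.single q (A * w q) : Fin n → R) s := by
    intro s
    by_cases h : s = q
    · subst h; simp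
    · simp [Pi.single_eq_of_ne h]
  simp only [h1]
  rw [Finset.sum_pi_single']
  simp

lemma Dpp_eq_zero (p : Fin (l₁ + l₂ + l₃)) (u : Alg F l₁ l₂ l₃ Γ) :
    Dpq F l₁ l₂ l₃ Γ p p u = 0 := by
  unfold Dpq; rw [sub_self]

lemma Dpq_swap (p q : Fin (l₁ + l₂ + l₃)) (u : Alg F l₁ l₂ l₃ Γ) :
    Dpq F l₁ l₂ l₃ Γ p q u = - Dpq F l₁ l₂ l₃ Γ q p u := by
  unfold Dpq; rw [neg_sub]

lemma Dpq_mem (p q : Fin (l₁ + l₂ + l₃)) (u : Alg F l₁ l₂ l₃ Γ) :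
    Dpq F l₁ l₂ l₃ Γ p q u ∈ Ssub F l₁ l₂ l₃ Γ :=
  Submodule.subset_span ⟨p, q, u, rfl⟩

/-- `D_{p,q}` as a linear map in `u`. -/
noncomputable def DpqL (p q : Fin (l₁ + l₂ + l₃)) :
    Alg F l₁ l₂ l₃ Γ →ₗ[F] Wt F l₁ l₂ l₃ Γ where
  toFun := Dpq F l₁ l₂ l₃ Γ p q
  map_add' u v := by
    unfold Dpq
    rw [map_add, map_add, Pi.single_add, Pi.single_add]
    abel
  map_smul' c u := by
    show Dpq F l₁ l₂ l₃ Γ p q (c • u) = (RingHom.id F) c • Dpq F l₁ l₂ l₃ Γ p q u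
    unfold Dpq
    rw [RingHom.id_apply, map_smul, map_smul, Pi.single_smul, Pi.single_smul, smul_sub]

lemma DpqL_apply (p q : Fin (l₁ + l₂ + l₃)) (u : Alg F l₁ l₂ l₃ Γ) :
    DpqL p q u = Dpq F l₁ l₂ l₃ Γ p q u := rfl

lemma wbr_Dpq_Dpq (p q : Fin (l₁ + l₂ + l₃)) (hpq : p ≠ q) (u v : Alg F l₁ l₂ l₃ Γ) :
    wbr F l₁ l₂ l₃ Γ (Dpq F l₁ l₂ l₃ Γ p q u) (Dpq F l₁ l₂ l₃ Γ p q v)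
      = Dpq F l₁ l₂ l₃ Γ p q
          (pd F l₁ l₂ l₃ Γ p u * pd F l₁ l₂ l₃ Γ q v
            - pd F l₁ l₂ l₃ Γ q u * pd F l₁ l₂ l₃ Γ p v) := by
  have hqp : q ≠ p := Ne.symm hpq
  funext r
  simp only [wbr, Dpq, Pi.sub_apply, sub_mul]
  rw [Finset.sum_sub_distrib, Finset.sum_sub_distrib, Finset.sum_sub_distrib,
    sum_single_mul, sum_single_mul, sum_single_mul, sum_single_mul]
  by_cases hr : r = q
  · rw [hr]
    simp only [Pi.single_eq_same, Pi.single_eq_of_ne hqp, sub_zero]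
    rw [map_sub (pd F l₁ l₂ l₃ Γ p), pd_mul, pd_mul, pd_comm q p v, pd_comm q p u]
    ring
  · by_cases hr' : r = p
    · rw [hr']
      simp only [Pi.single_eq_same, Pi.single_eq_of_ne hpq, zero_sub, map_neg, mul_neg]
      rw [map_sub (pd F l₁ l₂ l₃ Γ q), pd_mul, pd_mul, pd_comm q p v, pd_comm q p u]
      ring
    · simp only [Pi.single_eq_of_ne hr, Pi.single_eq_of_ne hr', sub_zero, sub_self,
        map_zero, mul_zero]

lemma wbr_wD_Dpq (a : Fin (l₁ + l₂ + l₃) → F) (p q : Fin (l₁ + l₂ + l₃))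
    (u : Alg F l₁ l₂ l₃ Γ) :
    wbr F l₁ l₂ l₃ Γ (wD F l₁ l₂ l₃ Γ a) (Dpq F l₁ l₂ l₃ Γ p q u)
      = Dpq F l₁ l₂ l₃ Γ p q (∑ s, a s • pd F l₁ l₂ l₃ Γ s u) := by
  by_cases hpq : p = q
  · subst hpq
    rw [Dpp_eq_zero, Dpp_eq_zero]
    funext r
    simp [wbr, wD, pd_algebraMap]
  · funext r
    have hqp : q ≠ p := Ne.symm hpq
    simp only [wbr, wD, pd_algebraMap, mul_zero, sub_zero, ← Algebra.smul_def]
    by_cases hr : r = q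
    · rw [hr]
      simp only [Dpq, Pi.sub_apply, Pi.single_eq_same, Pi.single_eq_of_ne hqp, sub_zero,
        map_sum, map_smul]
      exact Finset.sum_congr rfl fun s _ => by rw [pd_comm s p u]
    · by_cases hr' : r = p
      · rw [hr']
        simp only [Dpq, Pi.sub_apply, Pi.single_eq_same, Pi.single_eq_of_ne hpq, zero_sub,
          map_neg, map_sum, map_smul, smul_neg]
        rw [Finset.sum_neg_distrib]
        exact congrArg Neg.neg (Finset.sum_congr rfl fun s _ => by rw [pd_comm s q u])
      · simp only [Dpq, Pi.sub_apply, Pi.single_eq_of_ne hr, Pi.single_eq_of_ne hr', sub_self,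
          map_zero, smul_zero]
        simp


lemma icoord_single (p : Fin (l₁ + l₂ + l₃)) (hp : (p : ℕ) < l₁ + l₂) :
    icoord l₁ l₂ l₃ p (Finsupp.single (⟨(p : ℕ), hp⟩ : Fin (l₁ + l₂)) 1) = 1 := by
  rw [icoord_small p hp, Finsupp.single_apply, if_pos rfl]

lemma icoord_single_ne (q p : Fin (l₁ + l₂ + l₃)) (hp : (p : ℕ) < l₁ + l₂)
    (h : (q : ℕ) ≠ (p : ℕ)) :
    icoord l₁ l₂ l₃ q (Finsupp.single (⟨(p : ℕ), hp⟩ : Fin (l₁ + l₂)) 1) = 0 := by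
  by_cases hq : (q : ℕ) < l₁ + l₂
  · rw [icoord_small q hq, Finsupp.single_apply, if_neg (by simp [Fin.ext_iff]; omega)]
  · exact icoord_big q hq _

lemma lower_single_self (p : Fin (l₁ + l₂ + l₃)) (hp : (p : ℕ) < l₁ + l₂) :
    lower l₁ l₂ l₃ p (Finsupp.single (⟨(p : ℕ), hp⟩ : Fin (l₁ + l₂)) 1) = 0 := by
  rw [lower_small p hp]
  ext t
  simp [Finsupp.tsub_apply]

lemma lower_add_single_self (q : Fin (l₁ + l₂ + l₃)) (hq : (q : ℕ) < l₁ + l₂)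
    (i : Fin (l₁ + l₂) →₀ ℕ) :
    lower l₁ l₂ l₃ q (i + Finsupp.single (⟨(q : ℕ), hq⟩ : Fin (l₁ + l₂)) 1) = i := by
  rw [lower_small q hq]
  ext t
  simp only [Finsupp.tsub_apply, Finsupp.add_apply, Finsupp.single_apply]
  split_ifs <;> omega

lemma add_lower_cancel (p : Fin (l₁ + l₂ + l₃)) (hp : (p : ℕ) < l₁ + l₂)
    (i : Fin (l₁ + l₂) →₀ ℕ) (h : icoord l₁ l₂ l₃ p i ≠ 0) :
    Finsupp.single (⟨(p : ℕ), hp⟩ : Fin (l₁ + l₂)) 1 + lower l₁ l₂ l₃ p i = i := by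
  rw [lower_small p hp]
  rw [icoord_small p hp] at h
  ext t
  simp only [Finsupp.add_apply, Finsupp.tsub_apply, Finsupp.single_apply]
  by_cases ht : (⟨(p : ℕ), hp⟩ : Fin (l₁ + l₂)) = t
  · rw [if_pos ht, ← ht]; omega
  · rw [if_neg ht]; omega

lemma smul_mono_cancel (c : F) (p : Fin (l₁ + l₂ + l₃)) (hp : (p : ℕ) < l₁ + l₂) (α' : Γ)
    (i j : Fin (l₁ + l₂) →₀ ℕ) :
    (c * (icoord l₁ l₂ l₃ p i : F))
        • mono F l₁ l₂ l₃ Γ α'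
          (Finsupp.single (⟨(p : ℕ), hp⟩ : Fin (l₁ + l₂)) 1 + lower l₁ l₂ l₃ p i + j)
      = (c * (icoord l₁ l₂ l₃ p i : F)) • mono F l₁ l₂ l₃ Γ α' (i + j) := by
  by_cases h : icoord l₁ l₂ l₃ p i = 0
  · rw [h]; simp
  · rw [add_lower_cancel p hp i h]

/-- total degree of an exponent -/
def degn (i : Fin (l₁ + l₂) →₀ ℕ) : ℕ := i.sum fun _ n => n

lemma icoord_le_degn (p : Fin (l₁ + l₂ + l₃)) (i : Fin (l₁ + l₂) →₀ ℕ) :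
    icoord l₁ l₂ l₃ p i ≤ degn i := by
  by_cases hp : (p : ℕ) < l₁ + l₂
  · rw [icoord_small p hp]
    by_cases h : i ⟨(p : ℕ), hp⟩ = 0
    · rw [h]; exact Nat.zero_le _
    · exact Finset.single_le_sum (f := fun t => i t) (fun t _ => Nat.zero_le _)
        (Finsupp.mem_support_iff.mpr h)
  · rw [icoord_big p hp]; exact Nat.zero_le _

lemma degn_add (i j : Fin (l₁ + l₂) →₀ ℕ) : degn (i + j) = degn i + degn j := by
  unfold degn
  exact Finsupp.sum_add_index' (fun _ => rfl) (fun _ _ _ => rfl)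

lemma degn_lower (p : Fin (l₁ + l₂ + l₃)) (i : Fin (l₁ + l₂) →₀ ℕ)
    (h : icoord l₁ l₂ l₃ p i ≠ 0) :
    degn (lower l₁ l₂ l₃ p i) + 1 = degn i := by
  have hp : (p : ℕ) < l₁ + l₂ := by
    by_contra hp; rw [icoord_big p hp] at h; exact h rfl
  have heq := add_lower_cancel p hp i h
  have h1 : degn (Finsupp.single (⟨(p : ℕ), hp⟩ : Fin (l₁ + l₂)) 1) = 1 := by
    unfold degn
    rw [Finsupp.sum_single_index rfl]
  calc degn (lower l₁ l₂ l₃ p i) + 1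
      = degn (Finsupp.single (⟨(p : ℕ), hp⟩ : Fin (l₁ + l₂)) 1 + lower l₁ l₂ l₃ p i) := by
        rw [degn_add, h1]; omega
    _ = degn i := by rw [heq]

lemma beval_pi_single (β : Fin (l₂ + l₃) → F) (j : Fin (l₁ + l₂ + l₃)) :
    beval F l₁ l₂ l₃ β (Pi.single j 1) = fcoord F l₁ l₂ l₃ j β := by
  unfold beval
  rw [Finset.sum_eq_single j]
  · rw [Pi.single_eq_same, one_mul]
  · intro b _ hb
    rw [Pi.single_eq_of_ne hb, zero_mul]
  · intro h; exact absurd (Finset.mem_univ j) h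

lemma fcoord_shift (β : Fin (l₂ + l₃) → F) (k : Fin (l₂ + l₃)) (h : l₁ + (k : ℕ) < l₁ + l₂ + l₃) :
    fcoord F l₁ l₂ l₃ (⟨l₁ + (k : ℕ), h⟩ : Fin (l₁ + l₂ + l₃)) β = β k := by
  unfold fcoord
  rw [dif_pos (by omega : l₁ ≤ l₁ + (k : ℕ))]
  congr 1
  exact Fin.ext (by simp)

lemma pd_big_zero (r : Fin (l₁ + l₂ + l₃)) (hr : ¬ ((r : ℕ) < l₁ + l₂))
    (i : Fin (l₁ + l₂) →₀ ℕ) :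
    pd F l₁ l₂ l₃ Γ r (mono F l₁ l₂ l₃ Γ 0 i) = 0 := by
  rw [pd_mono, show ((0 : Γ) : Fin (l₂ + l₃) → F) = 0 from rfl, fcoord_zero,
    icoord_big r hr i]
  simp

lemma exists_coe_ne_zero (hΓ : Nondeg F l₂ l₃ Γ) (h23 : 0 < l₂ + l₃) :
    ∃ α : Γ, (α : Fin (l₂ + l₃) → F) ≠ 0 := by
  by_contra hall
  push_neg at hall
  have hsub : (Γ : Set (Fin (l₂ + l₃) → F)) ⊆ {0} := by
    intro x hx
    exact hall ⟨x, hx⟩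
  have hle : Submodule.span F (Γ : Set (Fin (l₂ + l₃) → F)) ≤ Submodule.span F {0} :=
    Submodule.span_mono hsub
  rw [hΓ, Submodule.span_zero_singleton] at hle
  have hx : ((Pi.single (⟨0, h23⟩ : Fin (l₂ + l₃)) (1 : F)) : Fin (l₂ + l₃) → F)
      ∈ (⊤ : Submodule F (Fin (l₂ + l₃) → F)) := Submodule.mem_top
  have := hle hx
  rw [Submodule.mem_bot] at this
  have := congrFun this ⟨0, h23⟩
  rw [Pi.single_eq_same] at this
  exact one_ne_zero this

lemma exists_fcoord_ne_zero (hΓ : Nondeg F l₂ l₃ Γ) (q : Fin (l₁ + l₂ + l₃))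
    (hq : l₁ ≤ (q : ℕ)) :
    ∃ α : Γ, fcoord F l₁ l₂ l₃ q ((α : Fin (l₂ + l₃) → F)) ≠ 0 := by
  by_contra hall
  push_neg at hall
  set k : Fin (l₂ + l₃) := ⟨(q : ℕ) - l₁, by have := q.isLt; omega⟩ with hk
  have hker : (Γ : Set (Fin (l₂ + l₃) → F)) ⊆
      ↑(LinearMap.ker (LinearMap.proj k : (Fin (l₂ + l₃) → F) →ₗ[F] F)) := by
    intro x hx
    have := hall ⟨x, hx⟩
    rw [fcoord, dif_pos hq] at this
    simpa [LinearMap.mem_ker] using this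
  have hle := Submodule.span_le.mpr hker
  rw [hΓ] at hle
  have hx0 : ((Pi.single k (1 : F)) : Fin (l₂ + l₃) → F)
      ∈ (⊤ : Submodule F (Fin (l₂ + l₃) → F)) := Submodule.mem_top
  have hx := hle hx0
  rw [LinearMap.mem_ker] at hx
  have : ((Pi.single k (1 : F)) : Fin (l₂ + l₃) → F) k = 0 := hx
  rw [Pi.single_eq_same] at this
  exact one_ne_zero this

lemma Da_mono (a : Fin (l₁ + l₂ + l₃) → F) (α : Γ) (i : Fin (l₁ + l₂) →₀ ℕ) :
    ∑ s, a s • pd F l₁ l₂ l₃ Γ s (mono F l₁ l₂ l₃ Γ α i)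
      = beval F l₁ l₂ l₃ (α : Fin (l₂ + l₃) → F) a • mono F l₁ l₂ l₃ Γ α i
        + ∑ s, (a s * (icoord l₁ l₂ l₃ s i : F))
            • mono F l₁ l₂ l₃ Γ α (lower l₁ l₂ l₃ s i) := by
  unfold beval
  rw [Finset.sum_smul, ← Finset.sum_add_distrib]
  refine Finset.sum_congr rfl fun s _ => ?_
  rw [pd_mono, smul_add, smul_smul, smul_smul]

lemma wbr_wD_Dpq_mono (a : Fin (l₁ + l₂ + l₃) → F) (p q : Fin (l₁ + l₂ + l₃)) (α : Γ)
    (i : Fin (l₁ + l₂) →₀ ℕ) :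
    wbr F l₁ l₂ l₃ Γ (wD F l₁ l₂ l₃ Γ a) (Dpq F l₁ l₂ l₃ Γ p q (mono F l₁ l₂ l₃ Γ α i))
      = beval F l₁ l₂ l₃ (α : Fin (l₂ + l₃) → F) a
          • Dpq F l₁ l₂ l₃ Γ p q (mono F l₁ l₂ l₃ Γ α i)
        + ∑ s, (a s * (icoord l₁ l₂ l₃ s i : F))
            • Dpq F l₁ l₂ l₃ Γ p q (mono F l₁ l₂ l₃ Γ α (lower l₁ l₂ l₃ s i)) := by
  rw [wbr_wD_Dpq, Da_mono]
  simp only [← DpqL_apply (F := F), ← map_smul, ← map_sum, ← map_add]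


lemma smul_mono_cancel' (c : F) (p : Fin (l₁ + l₂ + l₃)) (hp : (p : ℕ) < l₁ + l₂) (α' : Γ)
    (i : Fin (l₁ + l₂) →₀ ℕ) :
    (c * (icoord l₁ l₂ l₃ p i : F))
        • mono F l₁ l₂ l₃ Γ α'
          (Finsupp.single (⟨(p : ℕ), hp⟩ : Fin (l₁ + l₂)) 1 + lower l₁ l₂ l₃ p i)
      = (c * (icoord l₁ l₂ l₃ p i : F)) • mono F l₁ l₂ l₃ Γ α' i := by
  by_cases h : icoord l₁ l₂ l₃ p i = 0
  · rw [h]; simp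
  · rw [add_lower_cancel p hp i h]

lemma key_b (p q : Fin (l₁ + l₂ + l₃)) (hpq : p ≠ q) (hp : (p : ℕ) < l₁ + l₂)
    (hq : ¬ ((q : ℕ) < l₁ + l₂)) (α : Γ) (i : Fin (l₁ + l₂) →₀ ℕ) :
    wbr F l₁ l₂ l₃ Γ
        (Dpq F l₁ l₂ l₃ Γ p q
          (mono F l₁ l₂ l₃ Γ α (Finsupp.single (⟨(p : ℕ), hp⟩ : Fin (l₁ + l₂)) 1)))
        (Dpq F l₁ l₂ l₃ Γ p q (mono F l₁ l₂ l₃ Γ (-α) i))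
      = (-(fcoord F l₁ l₂ l₃ q (α : Fin (l₂ + l₃) → F) * ((icoord l₁ l₂ l₃ p i : F) + 1)))
          • Dpq F l₁ l₂ l₃ Γ p q (mono F l₁ l₂ l₃ Γ 0 i) := by
  rw [wbr_Dpq_Dpq p q hpq]
  rw [show (-(fcoord F l₁ l₂ l₃ q (α : Fin (l₂ + l₃) → F) * ((icoord l₁ l₂ l₃ p i : F) + 1)))
        • Dpq F l₁ l₂ l₃ Γ p q (mono F l₁ l₂ l₃ Γ 0 i)
      = Dpq F l₁ l₂ l₃ Γ p q
          ((-(fcoord F l₁ l₂ l₃ q (α : Fin (l₂ + l₃) → F) * ((icoord l₁ l₂ l₃ p i : F) + 1)))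
            • mono F l₁ l₂ l₃ Γ 0 i) from by
    simp only [← DpqL_apply (F := F), ← map_smul]]
  refine congrArg (Dpq F l₁ l₂ l₃ Γ p q) ?_
  rw [pd_mono, pd_mono, pd_mono, pd_mono,
    icoord_single p hp, lower_single_self p hp,
    icoord_big q hq (Finsupp.single (⟨(p : ℕ), hp⟩ : Fin (l₁ + l₂)) 1),
    icoord_big q hq i,
    show ((-α : Γ) : Fin (l₂ + l₃) → F) = -(α : Fin (l₂ + l₃) → F) from rfl,
    fcoord_neg, fcoord_neg]
  simp only [Nat.cast_one, Nat.cast_zero, one_smul, zero_smul, add_zero]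
  simp only [add_mul, mul_add, smul_mul_assoc, mul_smul_comm, smul_smul, smul_add, mono_mul,
    add_neg_cancel, zero_add]
  by_cases h0 : icoord l₁ l₂ l₃ p i = 0
  · rw [h0]
    simp only [Nat.cast_zero, mul_zero, zero_mul, zero_smul, add_zero, zero_add, smul_zero]
    module
  · rw [add_lower_cancel p hp i h0]
    module

lemma key_c (p q : Fin (l₁ + l₂ + l₃)) (hpq : p ≠ q) (hp : (p : ℕ) < l₁ + l₂)
    (hq : (q : ℕ) < l₁ + l₂) (α : Γ) (i : Fin (l₁ + l₂) →₀ ℕ) :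
    wbr F l₁ l₂ l₃ Γ
        (Dpq F l₁ l₂ l₃ Γ p q
          (mono F l₁ l₂ l₃ Γ α (Finsupp.single (⟨(p : ℕ), hp⟩ : Fin (l₁ + l₂)) 1)))
        (Dpq F l₁ l₂ l₃ Γ p q
          (mono F l₁ l₂ l₃ Γ (-α) (i + Finsupp.single (⟨(q : ℕ), hq⟩ : Fin (l₁ + l₂)) 1)))
      = (fcoord F l₁ l₂ l₃ p (α : Fin (l₂ + l₃) → F) * ((icoord l₁ l₂ l₃ q i : F) + 1))
          • Dpq F l₁ l₂ l₃ Γ p q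
            (mono F l₁ l₂ l₃ Γ 0 (Finsupp.single (⟨(p : ℕ), hp⟩ : Fin (l₁ + l₂)) 1 + i))
        - (fcoord F l₁ l₂ l₃ q (α : Fin (l₂ + l₃) → F) * ((icoord l₁ l₂ l₃ p i : F) + 1))
          • Dpq F l₁ l₂ l₃ Γ p q
            (mono F l₁ l₂ l₃ Γ 0 (i + Finsupp.single (⟨(q : ℕ), hq⟩ : Fin (l₁ + l₂)) 1))
        + ((icoord l₁ l₂ l₃ q i : F) + 1)
          • Dpq F l₁ l₂ l₃ Γ p q (mono F l₁ l₂ l₃ Γ 0 i) := by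
  have hvp : (p : ℕ) ≠ (q : ℕ) := Fin.val_ne_of_ne hpq
  have hvq : (q : ℕ) ≠ (p : ℕ) := Fin.val_ne_of_ne (Ne.symm hpq)
  rw [wbr_Dpq_Dpq p q hpq]
  rw [show ∀ (c₁ c₂ c₃ : F) (Y₁ Y₂ Y₃ : Alg F l₁ l₂ l₃ Γ),
      c₁ • Dpq F l₁ l₂ l₃ Γ p q Y₁ - c₂ • Dpq F l₁ l₂ l₃ Γ p q Y₂
          + c₃ • Dpq F l₁ l₂ l₃ Γ p q Y₃
        = Dpq F l₁ l₂ l₃ Γ p q (c₁ • Y₁ - c₂ • Y₂ + c₃ • Y₃) from fun c₁ c₂ c₃ Y₁ Y₂ Y₃ => by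
    simp only [← DpqL_apply (F := F), ← map_smul, ← map_sub, ← map_add]]
  refine congrArg (Dpq F l₁ l₂ l₃ Γ p q) ?_
  rw [pd_mono, pd_mono, pd_mono, pd_mono,
    icoord_single p hp, lower_single_self p hp,
    icoord_single_ne q p hp hvq,
    icoord_add p i (Finsupp.single (⟨(q : ℕ), hq⟩ : Fin (l₁ + l₂)) 1),
    icoord_single_ne p q hq hvp,
    icoord_add q i (Finsupp.single (⟨(q : ℕ), hq⟩ : Fin (l₁ + l₂)) 1),
    icoord_single q hq,
    lower_add p i (Finsupp.single (⟨(q : ℕ), hq⟩ : Fin (l₁ + l₂)) 1)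
      (Or.inr (icoord_single_ne p q hq hvp)),
    lower_add_single_self q hq i,
    show ((-α : Γ) : Fin (l₂ + l₃) → F) = -(α : Fin (l₂ + l₃) → F) from rfl,
    fcoord_neg, fcoord_neg]
  simp only [Nat.cast_one, Nat.cast_zero, Nat.cast_add, one_smul, zero_smul, add_zero]
  simp only [add_mul, mul_add, smul_mul_assoc, mul_smul_comm, smul_smul, smul_add, mono_mul,
    add_neg_cancel, zero_add]
  simp only [← add_assoc]
  by_cases h0 : icoord l₁ l₂ l₃ p i = 0
  · rw [h0]
    simp only [Nat.cast_zero, mul_zero, zero_mul, zero_smul, add_zero, zero_add, smul_zero]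
    module
  · rw [add_lower_cancel p hp i h0]
    module


end Aux

section EndAux

variable {F : Type} [Field F] {V : Type} [AddCommGroup V] [Module F V]

lemma mulRight_form (T : Module.End F V) (c : F) :
    LinearMap.mulRight F T - c • (1 : Module.End F (Module.End F V))
      = LinearMap.mulRight F (T - c • (1 : Module.End F V)) := by
  ext X x
  simp [LinearMap.sub_apply, LinearMap.smul_apply, LinearMap.mulRight_apply,
    Module.End.one_apply, Module.End.mul_apply, map_sub, map_smul]

lemma mulLeft_form (T : Module.End F V) (d : F) :
    LinearMap.mulLeft F T - d • (1 : Module.End F (Module.End F V))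
      = LinearMap.mulLeft F (T - d • (1 : Module.End F V)) := by
  ext X x
  simp [LinearMap.sub_apply, LinearMap.smul_apply, LinearMap.mulLeft_apply,
    Module.End.one_apply, Module.End.mul_apply, map_sub, map_smul]

lemma eig_shift (T E : Module.End F V) (lam c : F) (M n : ℕ)
    (hE : ((LinearMap.mulLeft F T - LinearMap.mulRight F T
        - lam • (1 : Module.End F (Module.End F V))) ^ M) E = 0)
    (v : V) (hv : ((T - c • (1 : Module.End F V)) ^ n) v = 0) :
    ((T - (c + lam) • (1 : Module.End F V)) ^ (M + n)) (E v) = 0 := by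
  set A : Module.End F (Module.End F V) :=
    LinearMap.mulLeft F T - LinearMap.mulRight F T - lam • 1 with hAdef
  set B : Module.End F (Module.End F V) := LinearMap.mulRight F T - c • 1 with hBdef
  have h1 : Commute (LinearMap.mulLeft F T) (LinearMap.mulRight F T) :=
    LinearMap.commute_mulLeft_right T T
  have hB : B = LinearMap.mulRight F (T - c • (1 : Module.End F V)) := mulRight_form T c
  have hcomm : Commute A B := by
    have hLB : Commute (LinearMap.mulLeft F T) B :=
      h1.sub_right ((Commute.one_right _).smul_right c)
    have hRB : Commute (LinearMap.mulRight F T) B :=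
      (Commute.refl _).sub_right ((Commute.one_right _).smul_right c)
    have h1B : Commute (1 : Module.End F (Module.End F V)) B := Commute.one_left B
    exact (hLB.sub_left hRB).sub_left (h1B.smul_left lam)
  have hAB : A + B = LinearMap.mulLeft F (T - (c + lam) • (1 : Module.End F V)) := by
    rw [← mulLeft_form]
    refine LinearMap.ext fun X => ?_
    rw [hAdef, hBdef]
    simp only [LinearMap.add_apply, LinearMap.sub_apply, LinearMap.smul_apply,
      LinearMap.mulLeft_apply, LinearMap.mulRight_apply, Module.End.one_apply]
    module
  have step : ((T - (c + lam) • (1 : Module.End F V)) ^ (M + n)) (E v)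
      = ∑ m ∈ Finset.range (M + n + 1),
          ((A ^ m * B ^ (M + n - m)
            * (((M + n).choose m : ℕ) : Module.End F (Module.End F V))) E) v := by
    have h2 : ((T - (c + lam) • (1 : Module.End F V)) ^ (M + n)) (E v)
        = ((((A + B) ^ (M + n))) E) v := by
      rw [hAB, LinearMap.pow_mulLeft, LinearMap.mulLeft_apply, Module.End.mul_apply]
    rw [h2, hcomm.add_pow, LinearMap.sum_apply, LinearMap.sum_apply]
  rw [step]
  apply Finset.sum_eq_zero
  intro m _
  have hswap : A ^ m * B ^ (M + n - m)
        * (((M + n).choose m : ℕ) : Module.End F (Module.End F V))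
      = (((M + n).choose m : ℕ) : Module.End F (Module.End F V))
        * (B ^ (M + n - m) * A ^ m) := by
    rw [(hcomm.pow_pow m (M + n - m)).eq]
    rw [mul_assoc] at *
    exact ((Nat.cast_commute ((M + n).choose m)
      (B ^ (M + n - m) * A ^ m)).eq).symm
  rw [hswap, Module.End.mul_apply, Module.End.mul_apply, Module.End.natCast_apply,
    LinearMap.smul_apply]
  by_cases hm : M ≤ m
  · have hAm : (A ^ m) E = 0 := by
      rw [show m = (m - M) + M by omega, pow_add, Module.End.mul_apply, hE, map_zero]
    rw [hAm, map_zero, LinearMap.zero_apply, smul_zero]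
  · have hj : M + n - m = (M + n - m - n) + n := by omega
    rw [hB, LinearMap.pow_mulRight, LinearMap.mulRight_apply, Module.End.mul_apply,
      hj, pow_add, Module.End.mul_apply, hv, map_zero, map_zero, smul_zero]
  done

lemma eig_disjoint (T : Module.End F V) (c₁ c₂ : F) (hne : c₁ ≠ c₂) :
    ∀ (m k : ℕ) (v : V), ((T - c₁ • (1 : Module.End F V)) ^ m) v = 0 →
      ((T - c₂ • (1 : Module.End F V)) ^ k) v = 0 → v = 0 := by
  intro m
  induction m with
  | zero =>
      intro k v h1 _
      simpa using h1
  | succ m ih =>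
      intro k v h1 h2
      have hcomm : Commute (T - c₂ • (1 : Module.End F V)) (T - c₁ • (1 : Module.End F V)) := by
        have hT : Commute T (T - c₁ • (1 : Module.End F V)) :=
          (Commute.refl T).sub_right ((Commute.one_right T).smul_right c₁)
        have h1' : Commute ((1 : Module.End F V)) (T - c₁ • (1 : Module.End F V)) :=
          Commute.one_left _
        exact hT.sub_left (h1'.smul_left c₂)
      have hw : (T - c₁ • (1 : Module.End F V)) v = 0 := by
        apply ih k
        · rw [← Module.End.mul_apply, ← pow_succ]
          exact h1
        · rw [← Module.End.mul_apply, (hcomm.pow_left k).eq, Module.End.mul_apply, h2,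
            map_zero]
      have hTv : T v = c₁ • v := by
        have h' : T v - c₁ • v = 0 := by
          simpa [LinearMap.sub_apply, LinearMap.smul_apply, Module.End.one_apply] using hw
        rw [sub_eq_zero] at h'
        exact h'
      have hk : ∀ j : ℕ, ((T - c₂ • (1 : Module.End F V)) ^ j) v = (c₁ - c₂) ^ j • v := by
        intro j
        induction j with
        | zero => simp
        | succ j ihj =>
            rw [pow_succ, Module.End.mul_apply, show (T - c₂ • (1 : Module.End F V)) v
              = (c₁ - c₂) • v by
                simp [LinearMap.sub_apply, LinearMap.smul_apply, Module.End.one_apply, hTv,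
                  sub_smul],
              map_smul, ihj, smul_smul, ← pow_succ']
      rw [hk k] at h2
      have hpow : (c₁ - c₂) ^ k ≠ 0 := pow_ne_zero _ (sub_ne_zero.mpr hne)
      exact (smul_eq_zero.mp h2).resolve_left hpow

end EndAux


section RepAux

set_option linter.unusedSectionVars false

variable {F : Type} [Field F] [CharZero F]
variable {l₁ l₂ l₃ : ℕ} {Γ : AddSubgroup (Fin (l₂ + l₃) → F)}
variable {V : Type} [AddCommGroup V] [Module F V]
variable (ρ : ↥(Ssub F l₁ l₂ l₃ Γ) →ₗ[F] Module.End F V)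

lemma bracket_rho
    (hρ : ∀ (X Y : Wt F l₁ l₂ l₃ Γ) (hX : X ∈ Ssub F l₁ l₂ l₃ Γ)
        (hY : Y ∈ Ssub F l₁ l₂ l₃ Γ) (hXY : wbr F l₁ l₂ l₃ Γ X Y ∈ Ssub F l₁ l₂ l₃ Γ),
      ρ ⟨wbr F l₁ l₂ l₃ Γ X Y, hXY⟩ = ρ ⟨X, hX⟩ * ρ ⟨Y, hY⟩ - ρ ⟨Y, hY⟩ * ρ ⟨X, hX⟩)
    (hD : ∀ a : Fin (l₁ + l₂ + l₃) → F, wD F l₁ l₂ l₃ Γ a ∈ Ssub F l₁ l₂ l₃ Γ)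
    (a : Fin (l₁ + l₂ + l₃) → F) (p q : Fin (l₁ + l₂ + l₃)) (α : Γ)
    (i : Fin (l₁ + l₂) →₀ ℕ) :
    ρ ⟨wD F l₁ l₂ l₃ Γ a, hD a⟩
        * ρ ⟨Dpq F l₁ l₂ l₃ Γ p q (mono F l₁ l₂ l₃ Γ α i), Dpq_mem p q _⟩
      - ρ ⟨Dpq F l₁ l₂ l₃ Γ p q (mono F l₁ l₂ l₃ Γ α i), Dpq_mem p q _⟩
        * ρ ⟨wD F l₁ l₂ l₃ Γ a, hD a⟩
    = beval F l₁ l₂ l₃ (α : Fin (l₂ + l₃) → F) a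
        • ρ ⟨Dpq F l₁ l₂ l₃ Γ p q (mono F l₁ l₂ l₃ Γ α i), Dpq_mem p q _⟩
      + ∑ s, (a s * (icoord l₁ l₂ l₃ s i : F))
          • ρ ⟨Dpq F l₁ l₂ l₃ Γ p q (mono F l₁ l₂ l₃ Γ α (lower l₁ l₂ l₃ s i)),
              Dpq_mem p q _⟩ := by
  have hmem : wbr F l₁ l₂ l₃ Γ (wD F l₁ l₂ l₃ Γ a)
      (Dpq F l₁ l₂ l₃ Γ p q (mono F l₁ l₂ l₃ Γ α i)) ∈ Ssub F l₁ l₂ l₃ Γ := by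
    rw [wbr_wD_Dpq_mono]
    exact add_mem (Submodule.smul_mem _ _ (Dpq_mem p q _))
      (Submodule.sum_mem _ fun s _ => Submodule.smul_mem _ _ (Dpq_mem p q _))
  rw [← hρ _ _ (hD a) (Dpq_mem p q _) hmem]
  have h2 : (⟨wbr F l₁ l₂ l₃ Γ (wD F l₁ l₂ l₃ Γ a)
        (Dpq F l₁ l₂ l₃ Γ p q (mono F l₁ l₂ l₃ Γ α i)), hmem⟩ : ↥(Ssub F l₁ l₂ l₃ Γ))
      = beval F l₁ l₂ l₃ (α : Fin (l₂ + l₃) → F) a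
          • (⟨Dpq F l₁ l₂ l₃ Γ p q (mono F l₁ l₂ l₃ Γ α i), Dpq_mem p q _⟩ :
              ↥(Ssub F l₁ l₂ l₃ Γ))
        + ∑ s, (a s * (icoord l₁ l₂ l₃ s i : F))
            • (⟨Dpq F l₁ l₂ l₃ Γ p q (mono F l₁ l₂ l₃ Γ α (lower l₁ l₂ l₃ s i)),
                Dpq_mem p q _⟩ : ↥(Ssub F l₁ l₂ l₃ Γ)) := by
    apply Subtype.ext
    simp only [Submodule.coe_add, SetLike.val_smul, AddSubmonoidClass.coe_finset_sum]
    exact wbr_wD_Dpq_mono a p q α i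
  rw [h2, map_add, map_smul, map_sum]
  simp only [map_smul]

lemma claim1_nilp
    (hρ : ∀ (X Y : Wt F l₁ l₂ l₃ Γ) (hX : X ∈ Ssub F l₁ l₂ l₃ Γ)
        (hY : Y ∈ Ssub F l₁ l₂ l₃ Γ) (hXY : wbr F l₁ l₂ l₃ Γ X Y ∈ Ssub F l₁ l₂ l₃ Γ),
      ρ ⟨wbr F l₁ l₂ l₃ Γ X Y, hXY⟩ = ρ ⟨X, hX⟩ * ρ ⟨Y, hY⟩ - ρ ⟨Y, hY⟩ * ρ ⟨X, hX⟩)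
    (hD : ∀ a : Fin (l₁ + l₂ + l₃) → F, wD F l₁ l₂ l₃ Γ a ∈ Ssub F l₁ l₂ l₃ Γ)
    (a : Fin (l₁ + l₂ + l₃) → F) (p q : Fin (l₁ + l₂ + l₃)) (α : Γ) :
    ∀ (d : ℕ) (i : Fin (l₁ + l₂) →₀ ℕ), degn i ≤ d →
    ((LinearMap.mulLeft F (ρ ⟨wD F l₁ l₂ l₃ Γ a, hD a⟩)
        - LinearMap.mulRight F (ρ ⟨wD F l₁ l₂ l₃ Γ a, hD a⟩)
        - beval F l₁ l₂ l₃ (α : Fin (l₂ + l₃) → F) a • 1) ^ (d + 1))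
      (ρ ⟨Dpq F l₁ l₂ l₃ Γ p q (mono F l₁ l₂ l₃ Γ α i), Dpq_mem p q _⟩) = 0 := by
  have hAE : ∀ i' : Fin (l₁ + l₂) →₀ ℕ,
      (LinearMap.mulLeft F (ρ ⟨wD F l₁ l₂ l₃ Γ a, hD a⟩)
        - LinearMap.mulRight F (ρ ⟨wD F l₁ l₂ l₃ Γ a, hD a⟩)
        - beval F l₁ l₂ l₃ (α : Fin (l₂ + l₃) → F) a • 1)
        (ρ ⟨Dpq F l₁ l₂ l₃ Γ p q (mono F l₁ l₂ l₃ Γ α i'), Dpq_mem p q _⟩)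
      = ∑ s, (a s * (icoord l₁ l₂ l₃ s i' : F))
          • ρ ⟨Dpq F l₁ l₂ l₃ Γ p q (mono F l₁ l₂ l₃ Γ α (lower l₁ l₂ l₃ s i')),
              Dpq_mem p q _⟩ := by
    intro i'
    simp only [LinearMap.sub_apply, LinearMap.smul_apply, Module.End.one_apply,
      LinearMap.mulLeft_apply, LinearMap.mulRight_apply]
    rw [bracket_rho ρ hρ hD a p q α i', add_sub_cancel_left]
  intro d
  induction d with
  | zero =>
      intro i' hd
      rw [pow_one, hAE]
      apply Finset.sum_eq_zero
      intro s _
      have h5 : icoord l₁ l₂ l₃ s i' = 0 :=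
        Nat.le_zero.mp (le_trans (icoord_le_degn s i') hd)
      rw [h5]
      simp
  | succ d ih =>
      intro i' hd
      rw [pow_succ, Module.End.mul_apply, hAE, map_sum]
      apply Finset.sum_eq_zero
      intro s _
      rw [map_smul]
      by_cases h6 : icoord l₁ l₂ l₃ s i' = 0
      · rw [h6]; simp
      · rw [ih (lower l₁ l₂ l₃ s i') (by have := degn_lower s i' h6; omega), smul_zero]

lemma claim1
    (hρ : ∀ (X Y : Wt F l₁ l₂ l₃ Γ) (hX : X ∈ Ssub F l₁ l₂ l₃ Γ)
        (hY : Y ∈ Ssub F l₁ l₂ l₃ Γ) (hXY : wbr F l₁ l₂ l₃ Γ X Y ∈ Ssub F l₁ l₂ l₃ Γ),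
      ρ ⟨wbr F l₁ l₂ l₃ Γ X Y, hXY⟩ = ρ ⟨X, hX⟩ * ρ ⟨Y, hY⟩ - ρ ⟨Y, hY⟩ * ρ ⟨X, hX⟩)
    (hD : ∀ a : Fin (l₁ + l₂ + l₃) → F, wD F l₁ l₂ l₃ Γ a ∈ Ssub F l₁ l₂ l₃ Γ)
    (β : Fin (l₂ + l₃) → F)
    (hsingle : ∀ (v : V) (a : Fin (l₁ + l₂ + l₃) → F), ∃ n : ℕ,
      (((ρ ⟨wD F l₁ l₂ l₃ Γ a, hD a⟩ - beval F l₁ l₂ l₃ β a • 1) ^ n :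
          Module.End F V)) v = 0)
    (p q : Fin (l₁ + l₂ + l₃)) (α : Γ) (hα : (α : Fin (l₂ + l₃) → F) ≠ 0)
    (i : Fin (l₁ + l₂) →₀ ℕ) :
    ρ ⟨Dpq F l₁ l₂ l₃ Γ p q (mono F l₁ l₂ l₃ Γ α i), Dpq_mem p q _⟩ = 0 := by
  obtain ⟨s₀, hs₀⟩ : ∃ s₀, (α : Fin (l₂ + l₃) → F) s₀ ≠ 0 := by
    by_contra hc; push_neg at hc; exact hα (funext hc)
  have hj : l₁ + (s₀ : ℕ) < l₁ + l₂ + l₃ := by have := s₀.isLt; omega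
  have hlam0 : beval F l₁ l₂ l₃ (α : Fin (l₂ + l₃) → F)
      (Pi.single (⟨l₁ + (s₀ : ℕ), hj⟩ : Fin (l₁ + l₂ + l₃)) 1) ≠ 0 := by
    rw [beval_pi_single, fcoord_shift]
    exact hs₀
  apply LinearMap.ext
  intro v
  rw [LinearMap.zero_apply]
  obtain ⟨n₁, hn₁⟩ := hsingle v (Pi.single (⟨l₁ + (s₀ : ℕ), hj⟩ : Fin (l₁ + l₂ + l₃)) 1)
  obtain ⟨n₂, hn₂⟩ := hsingle
    ((ρ ⟨Dpq F l₁ l₂ l₃ Γ p q (mono F l₁ l₂ l₃ Γ α i), Dpq_mem p q _⟩) v)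
    (Pi.single (⟨l₁ + (s₀ : ℕ), hj⟩ : Fin (l₁ + l₂ + l₃)) 1)
  have h7 := eig_shift
    (ρ ⟨wD F l₁ l₂ l₃ Γ (Pi.single (⟨l₁ + (s₀ : ℕ), hj⟩ : Fin (l₁ + l₂ + l₃)) 1), hD _⟩)
    (ρ ⟨Dpq F l₁ l₂ l₃ Γ p q (mono F l₁ l₂ l₃ Γ α i), Dpq_mem p q _⟩)
    (beval F l₁ l₂ l₃ (α : Fin (l₂ + l₃) → F)
      (Pi.single (⟨l₁ + (s₀ : ℕ), hj⟩ : Fin (l₁ + l₂ + l₃)) 1))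
    (beval F l₁ l₂ l₃ β (Pi.single (⟨l₁ + (s₀ : ℕ), hj⟩ : Fin (l₁ + l₂ + l₃)) 1))
    (degn i + 1) n₁
    (claim1_nilp ρ hρ hD _ p q α (degn i) i le_rfl) v hn₁
  exact eig_disjoint _ _ _
    (fun hcc => hlam0 (by rwa [add_eq_left] at hcc)) _ n₂ _ h7 hn₂

end RepAux

section AbstractModule

variable {V : Type} [AddCommGroup V] [Module F V]
variable (ρ : ↥(Ssub F l₁ l₂ l₃ Γ) →ₗ[F] Module.End F V)

/-- `N` is an `S`-invariant subspace of the representation `ρ`. -/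
def InvSub (N : Submodule F V) : Prop :=
  ∀ (X : Wt F l₁ l₂ l₃ Γ) (hX : X ∈ Ssub F l₁ l₂ l₃ Γ), ∀ v ∈ N, ρ ⟨X, hX⟩ v ∈ N

/-- The representation `ρ` is irreducible. -/
def IsIrrRep : Prop :=
  (∃ v : V, v ≠ 0) ∧
    ∀ N : Submodule F V, InvSub F l₁ l₂ l₃ Γ ρ N → N = ⊥ ∨ N = ⊤

/-- The representation `ρ` is indecomposable. -/
def IsIndecRep : Prop :=
  (∃ v : V, v ≠ 0) ∧
    ∀ N₁ N₂ : Submodule F V, InvSub F l₁ l₂ l₃ Γ ρ N₁ → InvSub F l₁ l₂ l₃ Γ ρ N₂ →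
      N₁ ⊓ N₂ = ⊥ → N₁ ⊔ N₂ = ⊤ → N₁ = ⊥ ∨ N₂ = ⊥

/-- Lemma 3.1: a generalized weight module of `S(l₁,l₂,l₃;0,Γ)` (with weight
multiplicities `≤ 1`) which is concentrated in a single generalized weight `σ + μ` and is
irreducible or indecomposable must satisfy `σ + μ = 0` and be the one-dimensional trivial
module. -/
theorem stmt15 [IsAlgClosed F] [CharZero F]
    (h12 : 3 ≤ l₁ + l₂) (h23 : 3 ≤ l₂ + l₃) (hΓ : Nondeg F l₂ l₃ Γ)
    (hρ : ∀ (X Y : Wt F l₁ l₂ l₃ Γ) (hX : X ∈ Ssub F l₁ l₂ l₃ Γ)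
        (hY : Y ∈ Ssub F l₁ l₂ l₃ Γ) (hXY : wbr F l₁ l₂ l₃ Γ X Y ∈ Ssub F l₁ l₂ l₃ Γ),
      ρ ⟨wbr F l₁ l₂ l₃ Γ X Y, hXY⟩ = ρ ⟨X, hX⟩ * ρ ⟨Y, hY⟩ - ρ ⟨Y, hY⟩ * ρ ⟨X, hX⟩)
    (hD : ∀ a : Fin (l₁ + l₂ + l₃) → F, wD F l₁ l₂ l₃ Γ a ∈ Ssub F l₁ l₂ l₃ Γ)
    (σ : Γ) (μ : Fin (l₂ + l₃) → F)
    (hsingle : ∀ (v : V) (a : Fin (l₁ + l₂ + l₃) → F), ∃ n : ℕ,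
      (((ρ ⟨wD F l₁ l₂ l₃ Γ a, hD a⟩
            - beval F l₁ l₂ l₃ ((σ : Fin (l₂ + l₃) → F) + μ) a • 1) ^ n :
          Module.End F V)) v = 0)
    (hmult : ∀ β : Fin (l₂ + l₃) → F,
      Module.rank F
          ↥(Submodule.span F {v : V | ∀ a : Fin (l₁ + l₂ + l₃) → F,
              ρ ⟨wD F l₁ l₂ l₃ Γ a, hD a⟩ v = beval F l₁ l₂ l₃ β a • v}) ≤ 1)
    (hV : IsIrrRep F l₁ l₂ l₃ Γ ρ ∨ IsIndecRep F l₁ l₂ l₃ Γ ρ) :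
    (σ : Fin (l₂ + l₃) → F) + μ = 0 ∧ Module.rank F V = 1 ∧
      ∀ (X : Wt F l₁ l₂ l₃ Γ) (hX : X ∈ Ssub F l₁ l₂ l₃ Γ), ρ ⟨X, hX⟩ = 0 := by
  classical
  have memK : ∀ (x : Wt F l₁ l₂ l₃ Γ) (hx : x ∈ Ssub F l₁ l₂ l₃ Γ),
      ρ ⟨x, hx⟩ = 0 →
      x ∈ Submodule.map (Ssub F l₁ l₂ l₃ Γ).subtype (LinearMap.ker ρ) :=
    fun x hx h => ⟨⟨x, hx⟩, h, rfl⟩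
  have Kzero : ∀ (x : Wt F l₁ l₂ l₃ Γ) (hx : x ∈ Ssub F l₁ l₂ l₃ Γ),
      x ∈ Submodule.map (Ssub F l₁ l₂ l₃ Γ).subtype (LinearMap.ker ρ) →
      ρ ⟨x, hx⟩ = 0 := by
    intro x hx hxK
    obtain ⟨y, hy, hyx⟩ := hxK
    have he : (⟨x, hx⟩ : ↥(Ssub F l₁ l₂ l₃ Γ)) = y := Subtype.ext hyx.symm
    rw [he]
    exact hy
  have EK : ∀ (p q : Fin (l₁ + l₂ + l₃)) (α : Γ) (i : Fin (l₁ + l₂) →₀ ℕ),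
      (α : Fin (l₂ + l₃) → F) ≠ 0 →
      Dpq F l₁ l₂ l₃ Γ p q (mono F l₁ l₂ l₃ Γ α i)
        ∈ Submodule.map (Ssub F l₁ l₂ l₃ Γ).subtype (LinearMap.ker ρ) := by
    intro p q α i hα
    exact memK _ (Dpq_mem p q _)
      (claim1 ρ hρ hD ((σ : Fin (l₂ + l₃) → F) + μ) hsingle p q α hα i)
  have brK : ∀ (X Y : Wt F l₁ l₂ l₃ Γ) (hX : X ∈ Ssub F l₁ l₂ l₃ Γ)
      (hY : Y ∈ Ssub F l₁ l₂ l₃ Γ) (hB : wbr F l₁ l₂ l₃ Γ X Y ∈ Ssub F l₁ l₂ l₃ Γ),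
      X ∈ Submodule.map (Ssub F l₁ l₂ l₃ Γ).subtype (LinearMap.ker ρ) →
      Y ∈ Submodule.map (Ssub F l₁ l₂ l₃ Γ).subtype (LinearMap.ker ρ) →
      wbr F l₁ l₂ l₃ Γ X Y
        ∈ Submodule.map (Ssub F l₁ l₂ l₃ Γ).subtype (LinearMap.ker ρ) := by
    intro X Y hX hY hB hXK hYK
    apply memK _ hB
    rw [hρ X Y hX hY hB, Kzero X hX hXK, Kzero Y hY hYK]
    simp
  have hnat1 : ∀ m : ℕ, ((m : F) + 1) ≠ 0 := fun m => Nat.cast_add_one_ne_zero m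
  have C2' : ∀ (p q : Fin (l₁ + l₂ + l₃)) (i : Fin (l₁ + l₂) →₀ ℕ), p ≠ q →
      (p : ℕ) < l₁ + l₂ →
      Dpq F l₁ l₂ l₃ Γ p q (mono F l₁ l₂ l₃ Γ 0 i)
        ∈ Submodule.map (Ssub F l₁ l₂ l₃ Γ).subtype (LinearMap.ker ρ) := by
    intro p q i hpq hp
    by_cases hq : (q : ℕ) < l₁ + l₂
    · -- both indices in the `t`-range
      obtain ⟨α₀, hα₀⟩ := exists_coe_ne_zero hΓ (by omega)
      have hαn : ((-α₀ : Γ) : Fin (l₂ + l₃) → F) ≠ 0 := by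
        rw [show ((-α₀ : Γ) : Fin (l₂ + l₃) → F) = -(α₀ : Fin (l₂ + l₃) → F) from rfl]
        exact neg_ne_zero.mpr hα₀
      have hα₀2 : ((α₀ + α₀ : Γ) : Fin (l₂ + l₃) → F) ≠ 0 := by
        rw [show ((α₀ + α₀ : Γ) : Fin (l₂ + l₃) → F)
            = (α₀ : Fin (l₂ + l₃) → F) + (α₀ : Fin (l₂ + l₃) → F) from rfl]
        intro hcc
        apply hα₀
        funext k
        have h2 := congrFun hcc k
        simp only [Pi.add_apply, Pi.zero_apply] at h2
        have h3 : (2 : F) * ((α₀ : Fin (l₂ + l₃) → F) k) = 0 := by rw [two_mul]; exact h2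
        exact (mul_eq_zero.mp h3).resolve_left two_ne_zero
      have hαn2 : ((-(α₀ + α₀) : Γ) : Fin (l₂ + l₃) → F) ≠ 0 := by
        rw [show ((-(α₀ + α₀) : Γ) : Fin (l₂ + l₃) → F)
            = -((α₀ + α₀ : Γ) : Fin (l₂ + l₃) → F) from rfl]
        exact neg_ne_zero.mpr hα₀2
      have hw1 := key_c p q hpq hp hq α₀ i
      have hw2 := key_c p q hpq hp hq (α₀ + α₀) i
      have hmemw : ∀ (α : Γ), wbr F l₁ l₂ l₃ Γ
          (Dpq F l₁ l₂ l₃ Γ p q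
            (mono F l₁ l₂ l₃ Γ α (Finsupp.single (⟨(p : ℕ), hp⟩ : Fin (l₁ + l₂)) 1)))
          (Dpq F l₁ l₂ l₃ Γ p q
            (mono F l₁ l₂ l₃ Γ (-α) (i + Finsupp.single (⟨(q : ℕ), hq⟩ : Fin (l₁ + l₂)) 1)))
          ∈ Ssub F l₁ l₂ l₃ Γ := by
        intro α
        rw [key_c p q hpq hp hq α i]
        exact add_mem (sub_mem (Submodule.smul_mem _ _ (Dpq_mem p q _))
          (Submodule.smul_mem _ _ (Dpq_mem p q _))) (Submodule.smul_mem _ _ (Dpq_mem p q _))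
      have hm1 := brK _ _ (Dpq_mem p q _) (Dpq_mem p q _) (hmemw α₀)
        (EK p q α₀ _ hα₀) (EK p q (-α₀) _ hαn)
      have hm2 := brK _ _ (Dpq_mem p q _) (Dpq_mem p q _) (hmemw (α₀ + α₀))
        (EK p q (α₀ + α₀) _ hα₀2) (EK p q (-(α₀ + α₀)) _ hαn2)
      have hcomb : ((icoord l₁ l₂ l₃ q i : F) + 1)
            • Dpq F l₁ l₂ l₃ Γ p q (mono F l₁ l₂ l₃ Γ 0 i)
          = (2 : F) • wbr F l₁ l₂ l₃ Γ
              (Dpq F l₁ l₂ l₃ Γ p q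
                (mono F l₁ l₂ l₃ Γ α₀ (Finsupp.single (⟨(p : ℕ), hp⟩ : Fin (l₁ + l₂)) 1)))
              (Dpq F l₁ l₂ l₃ Γ p q
                (mono F l₁ l₂ l₃ Γ (-α₀)
                  (i + Finsupp.single (⟨(q : ℕ), hq⟩ : Fin (l₁ + l₂)) 1)))
            - wbr F l₁ l₂ l₃ Γ
              (Dpq F l₁ l₂ l₃ Γ p q
                (mono F l₁ l₂ l₃ Γ (α₀ + α₀)
                  (Finsupp.single (⟨(p : ℕ), hp⟩ : Fin (l₁ + l₂)) 1)))
              (Dpq F l₁ l₂ l₃ Γ p q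
                (mono F l₁ l₂ l₃ Γ (-(α₀ + α₀))
                  (i + Finsupp.single (⟨(q : ℕ), hq⟩ : Fin (l₁ + l₂)) 1))) := by
        rw [hw1, hw2, show ((α₀ + α₀ : Γ) : Fin (l₂ + l₃) → F)
            = (α₀ : Fin (l₂ + l₃) → F) + (α₀ : Fin (l₂ + l₃) → F) from rfl,
          fcoord_add, fcoord_add]
        module
      have hKc : ((icoord l₁ l₂ l₃ q i : F) + 1)
          • Dpq F l₁ l₂ l₃ Γ p q (mono F l₁ l₂ l₃ Γ 0 i)
          ∈ Submodule.map (Ssub F l₁ l₂ l₃ Γ).subtype (LinearMap.ker ρ) := by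
        rw [hcomb]
        exact Submodule.sub_mem _ (Submodule.smul_mem _ _ hm1) hm2
      have hfin := Submodule.smul_mem
        (Submodule.map (Ssub F l₁ l₂ l₃ Γ).subtype (LinearMap.ker ρ))
        (((icoord l₁ l₂ l₃ q i : F) + 1)⁻¹) hKc
      rwa [smul_smul, inv_mul_cancel₀ (hnat1 _), one_smul] at hfin
    · -- q in the `x`-only range
      obtain ⟨α₀, hf⟩ := exists_fcoord_ne_zero hΓ q (by omega)
      have hα₀ : (α₀ : Fin (l₂ + l₃) → F) ≠ 0 := by
        intro hcc
        apply hf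
        rw [hcc, fcoord_zero]
      have hαn : ((-α₀ : Γ) : Fin (l₂ + l₃) → F) ≠ 0 := by
        rw [show ((-α₀ : Γ) : Fin (l₂ + l₃) → F) = -(α₀ : Fin (l₂ + l₃) → F) from rfl]
        exact neg_ne_zero.mpr hα₀
      have hw := key_b p q hpq hp hq α₀ i
      have hmemw : wbr F l₁ l₂ l₃ Γ
          (Dpq F l₁ l₂ l₃ Γ p q
            (mono F l₁ l₂ l₃ Γ α₀ (Finsupp.single (⟨(p : ℕ), hp⟩ : Fin (l₁ + l₂)) 1)))
          (Dpq F l₁ l₂ l₃ Γ p q (mono F l₁ l₂ l₃ Γ (-α₀) i)) ∈ Ssub F l₁ l₂ l₃ Γ := by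
        rw [hw]
        exact Submodule.smul_mem _ _ (Dpq_mem p q _)
      have hm := brK _ _ (Dpq_mem p q _) (Dpq_mem p q _) hmemw
        (EK p q α₀ _ hα₀) (EK p q (-α₀) _ hαn)
      rw [hw] at hm
      have hne : (-(fcoord F l₁ l₂ l₃ q (α₀ : Fin (l₂ + l₃) → F)
          * ((icoord l₁ l₂ l₃ p i : F) + 1))) ≠ 0 :=
        neg_ne_zero.mpr (mul_ne_zero hf (hnat1 _))
      have hfin := Submodule.smul_mem
        (Submodule.map (Ssub F l₁ l₂ l₃ Γ).subtype (LinearMap.ker ρ))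
        ((-(fcoord F l₁ l₂ l₃ q (α₀ : Fin (l₂ + l₃) → F)
          * ((icoord l₁ l₂ l₃ p i : F) + 1)))⁻¹) hm
      rwa [smul_smul, inv_mul_cancel₀ hne, one_smul] at hfin
  have C2 : ∀ (p q : Fin (l₁ + l₂ + l₃)) (i : Fin (l₁ + l₂) →₀ ℕ),
      Dpq F l₁ l₂ l₃ Γ p q (mono F l₁ l₂ l₃ Γ 0 i)
        ∈ Submodule.map (Ssub F l₁ l₂ l₃ Γ).subtype (LinearMap.ker ρ) := by
    intro p q i
    by_cases hpq : p = q
    · rw [hpq, Dpp_eq_zero]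
      exact Submodule.zero_mem _
    · by_cases hp : (p : ℕ) < l₁ + l₂
      · exact C2' p q i hpq hp
      · by_cases hq : (q : ℕ) < l₁ + l₂
        · rw [Dpq_swap]
          exact Submodule.neg_mem _ (C2' q p i (Ne.symm hpq) hq)
        · have hz : Dpq F l₁ l₂ l₃ Γ p q (mono F l₁ l₂ l₃ Γ 0 i) = 0 := by
            show (Pi.single q (pd F l₁ l₂ l₃ Γ p (mono F l₁ l₂ l₃ Γ 0 i))
                  : Wt F l₁ l₂ l₃ Γ)
                - (Pi.single p (pd F l₁ l₂ l₃ Γ q (mono F l₁ l₂ l₃ Γ 0 i))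
                  : Wt F l₁ l₂ l₃ Γ) = 0
            rw [pd_big_zero p hp, pd_big_zero q hq]
            simp
          rw [hz]
          exact Submodule.zero_mem _
  have EKall : ∀ (p q : Fin (l₁ + l₂ + l₃)) (g : Γ) (i : Fin (l₁ + l₂) →₀ ℕ),
      Dpq F l₁ l₂ l₃ Γ p q (mono F l₁ l₂ l₃ Γ g i)
        ∈ Submodule.map (Ssub F l₁ l₂ l₃ Γ).subtype (LinearMap.ker ρ) := by
    intro p q g i
    by_cases hg : (g : Fin (l₂ + l₃) → F) = 0
    · have hg0 : g = 0 := Subtype.ext hg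
      rw [hg0]
      exact C2 p q i
    · exact EK p q g i hg
  have SK : Ssub F l₁ l₂ l₃ Γ
      ≤ Submodule.map (Ssub F l₁ l₂ l₃ Γ).subtype (LinearMap.ker ρ) := by
    apply Submodule.span_le.mpr
    rintro w ⟨p, q, u, rfl⟩
    have hu : Dpq F l₁ l₂ l₃ Γ p q u
        = u.coeff.sum fun g c => c • Dpq F l₁ l₂ l₃ Γ p q (mono F l₁ l₂ l₃ Γ g.1 g.2) := by
      rw [show Dpq F l₁ l₂ l₃ Γ p q u = DpqL p q u from rfl]
      conv_lhs => rw [← AddMonoidAlgebra.sum_coeff_single u]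
      rw [map_finsuppSum]
      refine Finset.sum_congr rfl fun g _ => ?_
      show DpqL p q (AddMonoidAlgebra.single g (u.coeff g))
          = u.coeff g • Dpq F l₁ l₂ l₃ Γ p q (mono F l₁ l₂ l₃ Γ g.1 g.2)
      rw [single_eq_smul_mono, map_smul, DpqL_apply]
    rw [hu, Finsupp.sum]
    exact Submodule.sum_mem _ fun g _ => Submodule.smul_mem _ _ (EKall p q g.1 g.2)
  have hall : ∀ (X : Wt F l₁ l₂ l₃ Γ) (hX : X ∈ Ssub F l₁ l₂ l₃ Γ), ρ ⟨X, hX⟩ = 0 :=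
    fun X hX => Kzero X hX (SK hX)
  obtain ⟨v₀, hv₀⟩ : ∃ v : V, v ≠ 0 := by rcases hV with h | h; exacts [h.1, h.1]
  have hb0 : ((σ : Fin (l₂ + l₃) → F) + μ) = 0 := by
    funext k
    have hjk : l₁ + (k : ℕ) < l₁ + l₂ + l₃ := by have := k.isLt; omega
    obtain ⟨n, hn⟩ := hsingle v₀
      (Pi.single (⟨l₁ + (k : ℕ), hjk⟩ : Fin (l₁ + l₂ + l₃)) 1)
    rw [hall _ (hD _)] at hn
    rcases Nat.eq_zero_or_pos n with hn0 | hn0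
    · rw [hn0, pow_zero, Module.End.one_apply] at hn
      exact absurd hn hv₀
    · have h9 : ((0 : Module.End F V)
            - beval F l₁ l₂ l₃ ((σ : Fin (l₂ + l₃) → F) + μ)
                (Pi.single (⟨l₁ + (k : ℕ), hjk⟩ : Fin (l₁ + l₂ + l₃)) 1) • 1)
          = (-(beval F l₁ l₂ l₃ ((σ : Fin (l₂ + l₃) → F) + μ)
                (Pi.single (⟨l₁ + (k : ℕ), hjk⟩ : Fin (l₁ + l₂ + l₃)) 1)))
              • (1 : Module.End F V) := by
        rw [zero_sub, neg_smul]
      rw [h9, smul_pow, one_pow, LinearMap.smul_apply, Module.End.one_apply,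
        smul_eq_zero] at hn
      rcases hn with hc | hc
      · have hc1 := (pow_eq_zero_iff hn0.ne').mp hc
        have hc2 := neg_eq_zero.mp hc1
        rw [beval_pi_single, fcoord_shift] at hc2
        show ((σ : Fin (l₂ + l₃) → F) + μ) k = 0
        exact hc2
      · exact absurd hc hv₀
  have hinv : ∀ N : Submodule F V, InvSub F l₁ l₂ l₃ Γ ρ N := by
    intro N X hX v hv
    rw [hall X hX, LinearMap.zero_apply]
    exact N.zero_mem
  have htriv : ∀ N : Submodule F V, N = ⊥ ∨ N = ⊤ := by
    intro N
    rcases hV with h | h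
    · exact h.2 N (hinv N)
    · obtain ⟨N', hcpl⟩ := Submodule.exists_isCompl N
      rcases h.2 N N' (hinv N) (hinv N') (disjoint_iff.mp hcpl.disjoint)
        (codisjoint_iff.mp hcpl.codisjoint) with h0 | h0
      · exact Or.inl h0
      · refine Or.inr ?_
        have hsup := codisjoint_iff.mp hcpl.codisjoint
        rw [h0, sup_bot_eq] at hsup
        exact hsup
  have hrank : Module.rank F V = 1 := by
    have hsp : Submodule.span F {v₀} = ⊤ := by
      rcases htriv (Submodule.span F {v₀}) with h | h
      · exact absurd (Submodule.span_singleton_eq_bot.mp h) hv₀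
      · exact h
    refine rank_eq_one v₀ hv₀ fun w => ?_
    exact Submodule.mem_span_singleton.mp (hsp ▸ Submodule.mem_top)
  exact ⟨hb0, hrank, hall⟩

end AbstractModule

end SDF
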